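/- Let r > 0 and let S be a set of points of the Euclidean plane (the centers of equal disks of radius r) such that: (i) S is locally finite, i.e., every bounded subset of the plane contains only finitely many points of S; and (ii) every point of the plane belongs to at least two of the closed disks of radius r centered at points of S. Then for every c ∈ S there exist a point p in the closed disk of radius r centered at c and three pairwise distinct centers s₁, s₂, s₃ ∈ S such that p lies in the closed disk of radius r centered at sᵢ for each i = 1, 2, 3. -/

import Mathlib

/-- If `S` is a locally finite set of centers of equal disks of radius `r > 0`
forming a two-fold covering of the plane, then for every `c ∈ S` there are a
point `p` of the disk around `c` and three pairwise distinct centers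
`s₁, s₂, s₃ ∈ S` whose disks all contain `p`. -/
theorem exists_point_in_three_disks
    (r : ℝ) (hr : 0 < r)
    (S : Set (EuclideanSpace ℝ (Fin 2)))
    (hfin : ∀ B : Set (EuclideanSpace ℝ (Fin 2)),
      Bornology.IsBounded B → (S ∩ B).Finite)
    (hcover : ∀ p : EuclideanSpace ℝ (Fin 2),
      ∃ s₁ ∈ S, ∃ s₂ ∈ S, s₁ ≠ s₂ ∧
        p ∈ Metric.closedBall s₁ r ∧ p ∈ Metric.closedBall s₂ r) :
    ∀ c ∈ S, ∃ p ∈ Metric.closedBall c r,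
      ∃ s₁ ∈ S, ∃ s₂ ∈ S, ∃ s₃ ∈ S,
        s₁ ≠ s₂ ∧ s₁ ≠ s₃ ∧ s₂ ≠ s₃ ∧
        p ∈ Metric.closedBall s₁ r ∧ p ∈ Metric.closedBall s₂ r ∧
        p ∈ Metric.closedBall s₃ r := by
  intro c hc
  by_contra hcon
  push_neg at hcon
  -- Every point of the disk around `c` lies in a disk of a center ≠ c.
  have hex : ∀ p ∈ Metric.closedBall c r,
      ∃ s ∈ S, s ≠ c ∧ p ∈ Metric.closedBall s r := by
    intro p _
    obtain ⟨s₁, hs₁, s₂, hs₂, hne, h₁, h₂⟩ := hcover p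
    rcases eq_or_ne s₁ c with h | h
    · exact ⟨s₂, hs₂, by rw [← h]; exact hne.symm, h₂⟩
    · exact ⟨s₁, hs₁, h, h₁⟩
  -- Uniqueness of that center.
  have huniq : ∀ p ∈ Metric.closedBall c r, ∀ s ∈ S, ∀ s' ∈ S,
      s ≠ c → s' ≠ c → p ∈ Metric.closedBall s r → p ∈ Metric.closedBall s' r →
      s = s' := by
    intro p hp s hs s' hs' hsc hs'c hps hps'
    by_contra hne
    exact hcon p hp c hc s hs s' hs' hsc.symm hs'c.symm hne hp hps hps'
  -- The finite set of relevant centers.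
  set T : Set (EuclideanSpace ℝ (Fin 2)) :=
    {s | s ∈ S ∧ s ≠ c ∧ dist s c ≤ 2 * r} with hT
  have hTfin : T.Finite := by
    have : T ⊆ S ∩ Metric.closedBall c (2 * r) := by
      rintro s ⟨h1, _, h3⟩
      exact ⟨h1, Metric.mem_closedBall.mpr h3⟩
    exact (hfin _ Metric.isBounded_closedBall).subset this
  have hmemT : ∀ p ∈ Metric.closedBall c r, ∀ s ∈ S, s ≠ c →
      p ∈ Metric.closedBall s r → s ∈ T := by
    intro p hp s hs hsc hps
    refine ⟨hs, hsc, ?_⟩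
    calc dist s c ≤ dist s p + dist p c := dist_triangle _ _ _
      _ ≤ r + r := add_le_add (dist_comm s p ▸ hps) hp
      _ = 2 * r := by ring
  have hcmem : c ∈ Metric.closedBall c r := Metric.mem_closedBall_self hr.le
  obtain ⟨s₀, hs₀S, hs₀c, hcs₀⟩ := hex c hcmem
  have hs₀T : s₀ ∈ T := hmemT c hcmem s₀ hs₀S hs₀c hcs₀
  -- The union of the other disks.
  set K : Set (EuclideanSpace ℝ (Fin 2)) :=
    ⋃ s ∈ T \ {s₀}, Metric.closedBall s r with hK
  have hKclosed : IsClosed K :=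
    hTfin.diff.isClosed_biUnion fun s _ => Metric.isClosed_closedBall
  have hKcover : Metric.closedBall c r ⊆ Metric.closedBall s₀ r ∪ K := by
    intro p hp
    obtain ⟨s, hsS, hsc, hps⟩ := hex p hp
    rcases eq_or_ne s s₀ with h | h
    · exact Or.inl (h ▸ hps)
    · exact Or.inr (Set.mem_biUnion ⟨hmemT p hp s hsS hsc hps, h⟩ hps)
  -- Disjointness via uniqueness: no point of the disk is in K.
  have hKempty : ∀ p ∈ Metric.closedBall c r, p ∉ K := by
    -- first use connectedness to rule out the mixed case
    have hpc := (convex_closedBall c r).isPreconnected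
    rw [isPreconnected_closed_iff] at hpc
    by_contra hcontra
    push_neg at hcontra
    obtain ⟨q, hq, hqK⟩ := hcontra
    obtain ⟨p, hp, hps₀, hpK⟩ := hpc (Metric.closedBall s₀ r) K
      Metric.isClosed_closedBall hKclosed hKcover ⟨c, hcmem, hcs₀⟩ ⟨q, hq, hqK⟩
    obtain ⟨s, hsT, hps⟩ := Set.mem_iUnion₂.mp hpK
    obtain ⟨⟨hsS, hsc, _⟩, hsne⟩ := hsT
    exact (hsne : s ≠ s₀) (huniq p hp s hsS s₀ hs₀S hsc hs₀c hps hps₀)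
  have hsub : Metric.closedBall c r ⊆ Metric.closedBall s₀ r := by
    intro p hp
    rcases hKcover hp with h | h
    · exact h
    · exact absurd h (hKempty p hp)
  -- Geometric contradiction: a ball of radius r can't contain another one
  -- of radius r with a different center.
  have hd : 0 < dist c s₀ := dist_pos.mpr hs₀c.symm
  set d := dist c s₀ with hdd
  set p : EuclideanSpace ℝ (Fin 2) := c + (r / d) • (c - s₀) with hp
  have hnorm : ‖c - s₀‖ = d := by rw [hdd, dist_eq_norm]
  have hpc : dist p c = r := by
    rw [dist_eq_norm, hp]
    have : c + (r / d) • (c - s₀) - c = (r / d) • (c - s₀) := by abel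
    rw [this, norm_smul, hnorm, Real.norm_eq_abs,
      abs_of_pos (div_pos hr hd), div_mul_cancel₀ _ hd.ne']
  have hps₀ : dist p s₀ = d + r := by
    rw [dist_eq_norm, hp]
    have : c + (r / d) • (c - s₀) - s₀ = (1 + r / d) • (c - s₀) := by
      rw [add_smul, one_smul]; abel
    rw [this, norm_smul, hnorm, Real.norm_eq_abs,
      abs_of_pos (by positivity : (0:ℝ) < 1 + r / d)]
    field_simp
  have hple : dist p s₀ ≤ r := hsub (Metric.mem_closedBall.mpr hpc.le)
  rw [hps₀] at hple
  linarith
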